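/- Let p, m be integers with p ≥ 2 and p + 1 < m < 2p − 1. Then the set 𝒮′ has maximum p/(p−1) and minimum (p−2)/(p−1); that is, both values lie in 𝒮′, and every element x of 𝒮′ satisfies (p−2)/(p−1) ≤ x ≤ p/(p−1). -/

import Mathlib

/-- The set `𝒜` of integer sequences `(a_k)_{k≥1}` (indexed here by `k : ℕ`, so `a k`
stands for `a_{k+1}`) with `|a_k| ≤ m - 1` and `∑_{k≥1} a_k p^{-k} = 1`. -/
def seqA (p m : ℤ) : Set (ℕ → ℤ) :=
  {a | (∀ k, |a k| ≤ m - 1) ∧ HasSum (fun k => (a k : ℝ) * ((p : ℝ)⁻¹) ^ (k + 1)) 1}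

/-- The set `ℬ` of integer sequences `(b_k)_{k≥1}` with `|b_k| ≤ m - 1` and
`∑_{k≥1} b_k p^{-k} = 0`. -/
def seqB (p m : ℤ) : Set (ℕ → ℤ) :=
  {b | (∀ k, |b k| ≤ m - 1) ∧ HasSum (fun k => (b k : ℝ) * ((p : ℝ)⁻¹) ^ (k + 1)) 0}

/-- `𝒮 = { ∑_{k≥1} a_k q^{-k} : (a_k) ∈ 𝒜 }`. -/
def setS (p q m : ℤ) : Set ℝ :=
  {x | ∃ a ∈ seqA p m, HasSum (fun k => (a k : ℝ) * ((q : ℝ)⁻¹) ^ (k + 1)) x}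

/-- `𝒮' = { ∑_{k≥1} k a_k p^{-k} : (a_k) ∈ 𝒜 }`. -/
def setS' (p m : ℤ) : Set ℝ :=
  {x | ∃ a ∈ seqA p m,
    HasSum (fun k => ((k + 1 : ℕ) : ℝ) * (a k : ℝ) * ((p : ℝ)⁻¹) ^ (k + 1)) x}

/-- `𝒬 = { ∑_{k≥1} b_k q^{-k} : (b_k) ∈ ℬ }`. -/
def setQ (p q m : ℤ) : Set ℝ :=
  {x | ∃ b ∈ seqB p m, HasSum (fun k => (b k : ℝ) * ((q : ℝ)⁻¹) ^ (k + 1)) x}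

/-- `𝒬' = { ∑_{k≥1} k b_k p^{-k} : (b_k) ∈ ℬ }`. -/
def setQ' (p m : ℤ) : Set ℝ :=
  {x | ∃ b ∈ seqB p m,
    HasSum (fun k => ((k + 1 : ℕ) : ℝ) * (b k : ℝ) * ((p : ℝ)⁻¹) ^ (k + 1)) x}

section Aux

variable {p : ℤ}

private lemma aux_hp1 (hp : 2 ≤ p) : (1 : ℝ) < (p : ℝ) := by exact_mod_cast lt_of_lt_of_le one_lt_two hp

private lemma aux_hr0 (hp : 2 ≤ p) : (0 : ℝ) ≤ (p : ℝ)⁻¹ := inv_nonneg.2 (le_of_lt (lt_trans one_pos (aux_hp1 hp)))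

private lemma aux_hr1 (hp : 2 ≤ p) : (p : ℝ)⁻¹ < 1 := by
  rw [inv_lt_one_iff₀]; right; exact aux_hp1 hp

private lemma aux_hpne (hp : 2 ≤ p) : (p : ℝ) ≠ 0 := ne_of_gt (lt_trans one_pos (aux_hp1 hp))

private lemma aux_hp1ne (hp : 2 ≤ p) : (p : ℝ) - 1 ≠ 0 := by have := aux_hp1 hp; linarith

/-- geometric: `∑ p^{-(k+1)} = 1/(p-1)`. -/
private lemma aux_G1 (hp : 2 ≤ p) : HasSum (fun k : ℕ => ((p : ℝ)⁻¹) ^ (k + 1)) (1 / ((p : ℝ) - 1)) := by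
  have h := (hasSum_geometric_of_lt_one (aux_hr0 hp) (aux_hr1 hp)).mul_left ((p : ℝ)⁻¹)
  have e1 : (fun k : ℕ => (p : ℝ)⁻¹ * ((p : ℝ)⁻¹) ^ k) = fun k : ℕ => ((p : ℝ)⁻¹) ^ (k + 1) := by
    funext k; rw [pow_succ]; ring
  rw [e1] at h
  convert h using 1
  · rfl
  have hpne := aux_hpne hp
  have h1 : (1 : ℝ) - (p : ℝ)⁻¹ = ((p : ℝ) - 1) / p := by field_simp
  rw [h1]
  field_simp

/-- `∑ (k+1) p^{-(k+1)} = p/(p-1)^2`. -/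
private lemma aux_G2 (hp : 2 ≤ p) :
    HasSum (fun k : ℕ => ((k + 1 : ℕ) : ℝ) * ((p : ℝ)⁻¹) ^ (k + 1)) ((p : ℝ) / ((p : ℝ) - 1) ^ 2) := by
  have hnorm : ‖(p : ℝ)⁻¹‖ < 1 := by rw [Real.norm_eq_abs, abs_of_nonneg (aux_hr0 hp)]; exact aux_hr1 hp
  have h := hasSum_coe_mul_geometric_of_norm_lt_one (𝕜 := ℝ) hnorm
  have h2 : HasSum (fun k : ℕ => ((k + 1 : ℕ) : ℝ) * ((p : ℝ)⁻¹) ^ (k + 1))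
      ((p : ℝ)⁻¹ / (1 - (p : ℝ)⁻¹) ^ 2) := by
    apply (hasSum_nat_add_iff (f := fun n : ℕ => (n : ℝ) * ((p : ℝ)⁻¹) ^ n) 1).2
    simpa using h
  convert h2 using 1
  have hpne := aux_hpne hp
  have h1 : (1 : ℝ) - (p : ℝ)⁻¹ = ((p : ℝ) - 1) / p := by field_simp
  have hne := aux_hp1ne hp
  rw [h1, div_pow]
  field_simp

end Aux


private lemma aux_mem_max (p m : ℤ) (hp : 2 ≤ p) (hm1 : p + 1 < m) :
    (p : ℝ) / ((p : ℝ) - 1) ∈ setS' p m := by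
  have hne := aux_hp1ne hp
  refine ⟨fun _ => p - 1, ⟨fun k => ?_, ?_⟩, ?_⟩
  · show |(p - 1 : ℤ)| ≤ m - 1
    rw [abs_of_nonneg (by omega : (0:ℤ) ≤ p - 1)]; omega
  · have h := (aux_G1 hp).mul_left ((p : ℝ) - 1)
    rw [show ((p:ℝ)-1) * (1/((p:ℝ)-1)) = 1 by field_simp] at h
    convert h using 1
    · rfl
    funext k; push_cast; ring
  · have h := (aux_G2 hp).mul_left ((p : ℝ) - 1)
    rw [show ((p:ℝ)-1) * ((p:ℝ)/((p:ℝ)-1)^2) = (p:ℝ)/((p:ℝ)-1) by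
      field_simp] at h
    convert h using 1
    · rfl
    funext k; push_cast; ring

private lemma aux_mem_min (p m : ℤ) (hp : 2 ≤ p) (hm1 : p + 1 < m) :
    ((p : ℝ) - 2) / ((p : ℝ) - 1) ∈ setS' p m := by
  have hne := aux_hp1ne hp
  have hpne := aux_hpne hp
  refine ⟨fun k => if k = 0 then p + 1 else -(p - 1), ⟨fun k => ?_, ?_⟩, ?_⟩
  · show |if k = 0 then p + 1 else -(p - 1)| ≤ m - 1
    by_cases hk : k = 0
    · rw [if_pos hk, abs_of_nonneg (by omega : (0:ℤ) ≤ p + 1)]; omega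
    · rw [if_neg hk, abs_of_nonpos (by omega : -(p - 1) ≤ (0:ℤ))]; omega
  · have h1 := (aux_G1 hp).mul_left ((1:ℝ) - p)
    have h2 := hasSum_ite_eq (0:ℕ) ((2:ℝ) * p * (p:ℝ)⁻¹)
    have H := h1.add h2
    rw [show ((1:ℝ)-p) * (1/((p:ℝ)-1)) + (2:ℝ)*p*(p:ℝ)⁻¹ = 1 by field_simp; ring] at H
    convert H using 1
    · rfl
    funext k
    by_cases hk : k = 0
    · subst hk; simp only [if_pos rfl]; push_cast; ring
    · simp only [if_neg hk]; push_cast; ring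
  · have h1 := (aux_G2 hp).mul_left ((1:ℝ) - p)
    have h2 := hasSum_ite_eq (0:ℕ) ((2:ℝ) * p * (p:ℝ)⁻¹)
    have H := h1.add h2
    rw [show ((1:ℝ)-p) * ((p:ℝ)/((p:ℝ)-1)^2) + (2:ℝ)*p*(p:ℝ)⁻¹ = ((p:ℝ)-2)/((p:ℝ)-1) by
      field_simp; ring] at H
    convert H using 1
    · rfl
    funext k
    by_cases hk : k = 0
    · subst hk; simp only [if_pos rfl]; push_cast; ring
    · simp only [if_neg hk]; push_cast; ring

private lemma aux_bound (p m : ℤ) (hp : 2 ≤ p) (hm1 : p + 1 < m) (hm2 : m < 2 * p - 1)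
    (x : ℝ) (hx : x ∈ setS' p m) :
    ((p : ℝ) - 2) / ((p : ℝ) - 1) ≤ x ∧ x ≤ (p : ℝ) / ((p : ℝ) - 1) := by
  obtain ⟨a, ⟨habs, hsum⟩, hxs⟩ := hx
  have hp1 := aux_hp1 hp
  have hpne := aux_hpne hp
  have hne := aux_hp1ne hp
  have hppos : (0:ℝ) < (p:ℝ) := by linarith
  set r : ℝ := (p : ℝ)⁻¹ with hr
  have hr0 : (0:ℝ) ≤ r := aux_hr0 hp
  have hr1 : r < 1 := aux_hr1 hp
  set c : ℕ → ℝ := fun k => (a k : ℝ) * r ^ (k + 1) with hc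
  set T : ℕ → ℝ := fun j => 1 - ∑ k ∈ Finset.range j, c k with hT
  -- tails
  have hTtail : ∀ j, HasSum (fun k => c (k + j)) (T j) := by
    intro j
    have h := (hasSum_nat_add_iff' (f := c) j).2 hsum
    exact h
  -- crude bound
  have hTbound : ∀ j, |T j| ≤ ((m:ℝ) - 1) * r ^ j / ((p:ℝ) - 1) := by
    intro j
    have hgeo : HasSum (fun k : ℕ => ((m:ℝ) - 1) * r ^ j * r ^ (k + 1))
        (((m:ℝ) - 1) * r ^ j * (1 / ((p:ℝ) - 1))) := (aux_G1 hp).mul_left _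
    have hb : ∀ k : ℕ, ‖c (k + j)‖ ≤ ((m:ℝ) - 1) * r ^ j * r ^ (k + 1) := by
      intro k
      rw [Real.norm_eq_abs, hc]
      simp only
      rw [abs_mul, abs_of_nonneg (pow_nonneg hr0 _)]
      have h1 : |(a (k + j) : ℝ)| ≤ (m:ℝ) - 1 := by
        rw [← Int.cast_abs]
        have := habs (k + j)
        push_cast
        exact_mod_cast this
      have h2 : r ^ (k + j + 1) = r ^ j * r ^ (k + 1) := by
        rw [← pow_add]; congr 1; omega
      rw [h2, ← mul_assoc]
      apply mul_le_mul_of_nonneg_right _ (pow_nonneg hr0 _)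
      calc |(a (k+j) : ℝ)| * r ^ j ≤ ((m:ℝ)-1) * r ^ j :=
        mul_le_mul_of_nonneg_right h1 (pow_nonneg hr0 _)
      _ = ((m:ℝ)-1) * r ^ j := rfl
    have := (hTtail j).norm_le_of_bounded hgeo hb
    rw [Real.norm_eq_abs] at this
    calc |T j| ≤ ((m:ℝ) - 1) * r ^ j * (1 / ((p:ℝ) - 1)) := this
      _ = ((m:ℝ) - 1) * r ^ j / ((p:ℝ) - 1) := by ring
  -- refined bound via integrality
  have hTr : ∀ j, |T j| ≤ r ^ j := by
    intro j
    set N : ℤ := p ^ j - ∑ k ∈ Finset.range j, a k * p ^ (j - 1 - k) with hN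
    have hcast : (N : ℝ) = (p:ℝ) ^ j * T j := by
      rw [hN]
      push_cast
      rw [hT]
      simp only
      rw [mul_sub, mul_one, Finset.mul_sum]
      congr 1
      apply Finset.sum_congr rfl
      intro k hk
      rw [Finset.mem_range] at hk
      have hk' : k + 1 ≤ j := hk
      have hpow : (p:ℝ) ^ j * ((p:ℝ)⁻¹) ^ (k+1) = (p:ℝ) ^ (j - 1 - k) := by
        rw [show j-1-k = j-(k+1) from by omega, pow_sub₀ _ hpne hk', inv_pow]
      rw [hc]
      simp only
      rw [hr, ← hpow]
      ring
    have hprj : (p:ℝ) ^ j * r ^ j = 1 := by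
      rw [hr, ← mul_pow, mul_inv_cancel₀ hpne, one_pow]
    have h2 : |(N:ℝ)| < 2 := by
      rw [hcast, abs_mul, abs_of_nonneg (pow_nonneg (le_of_lt hppos) j)]
      have hb := hTbound j
      have hm' : (m:ℝ) - 1 < 2 * ((p:ℝ) - 1) := by
        have : (m:ℤ) - 1 < 2 * (p - 1) := by omega
        push_cast
        exact_mod_cast this
      have hstep : (p:ℝ)^j * |T j| ≤ ((m:ℝ)-1) / ((p:ℝ)-1) := by
        calc (p:ℝ)^j * |T j| ≤ (p:ℝ)^j * (((m:ℝ) - 1) * r ^ j / ((p:ℝ) - 1)) := by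
              exact mul_le_mul_of_nonneg_left hb (pow_nonneg (le_of_lt hppos) j)
          _ = ((p:ℝ)^j * r^j) * (((m:ℝ)-1) / ((p:ℝ)-1)) := by ring
          _ = ((m:ℝ)-1) / ((p:ℝ)-1) := by rw [hprj, one_mul]
      have hlt : ((m:ℝ)-1) / ((p:ℝ)-1) < 2 := by
        rw [div_lt_iff₀ (by linarith)]
        linarith
      linarith
    have hN1 : |N| ≤ 1 := by
      have hNlt : |N| < 2 := by
        have : ((|N| : ℤ) : ℝ) < 2 := by rwa [Int.cast_abs]
        exact_mod_cast this
      omega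
    have hTeq : |T j| = |(N:ℝ)| / (p:ℝ)^j := by
      rw [hcast, abs_mul, abs_of_nonneg (pow_nonneg (le_of_lt hppos) j)]
      field_simp
    rw [hTeq]
    have hN1' : |(N:ℝ)| ≤ 1 := by
      have : ((|N| : ℤ) : ℝ) ≤ 1 := by exact_mod_cast hN1
      rwa [Int.cast_abs] at this
    calc |(N:ℝ)| / (p:ℝ)^j ≤ 1 / (p:ℝ)^j := by gcongr
      _ = r ^ j := by rw [hr, one_div, inv_pow]
  -- summability
  have hTnorm : Summable (fun j => ‖T j‖) := by
    refine Summable.of_nonneg_of_le (fun j => norm_nonneg _) (fun j => ?_)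
      (summable_geometric_of_lt_one hr0 hr1)
    rw [Real.norm_eq_abs]; exact hTr j
  -- partial-sum identity
  have hkey : ∀ n : ℕ, ∑ j ∈ Finset.range n, T j
      = (∑ k ∈ Finset.range n, ((k + 1 : ℕ) : ℝ) * (a k : ℝ) * r ^ (k + 1)) + n * T n := by
    intro n
    induction n with
    | zero => simp
    | succ n ih =>
      rw [Finset.sum_range_succ, Finset.sum_range_succ, ih]
      have hTn : T (n+1) = T n - c n := by
        rw [hT]; simp only; rw [Finset.sum_range_succ]; ring
      rw [hTn, hc]
      simp only
      push_cast
      ring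
  -- n * T n → 0
  have hnT0 : Filter.Tendsto (fun n : ℕ => (n:ℝ) * T n) Filter.atTop (nhds 0) := by
    have hsumm : Summable (fun n : ℕ => (n:ℝ) * r ^ n) :=
      ⟨_, hasSum_coe_mul_geometric_of_norm_lt_one
        (by rw [Real.norm_eq_abs, abs_of_nonneg hr0]; exact hr1)⟩
    apply squeeze_zero_norm _ hsumm.tendsto_atTop_zero
    intro n
    rw [Real.norm_eq_abs, abs_mul, Nat.abs_cast]
    exact mul_le_mul_of_nonneg_left (hTr n) (Nat.cast_nonneg n)
  have hpartial : Filter.Tendsto (fun n => ∑ j ∈ Finset.range n, T j)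
      Filter.atTop (nhds x) := by
    have h1 := hxs.tendsto_sum_nat
    have h2 := h1.add hnT0
    rw [add_zero] at h2
    exact Filter.Tendsto.congr (fun n => (hkey n).symm) h2
  have hTx : HasSum T x := (hasSum_iff_tendsto_nat_of_summable_norm hTnorm).2 hpartial
  have hT0 : T 0 = 1 := by rw [hT]; simp
  have hshift : HasSum (fun j => T (j + 1)) (x - 1) := by
    have h := (hasSum_nat_add_iff' (f := T) 1).2 hTx
    simpa [hT0] using h
  have hfinal : |x - 1| ≤ 1 / ((p:ℝ) - 1) := by
    have h := hshift.norm_le_of_bounded (aux_G1 hp)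
      (fun j => by rw [Real.norm_eq_abs]; exact hTr (j + 1))
    rwa [Real.norm_eq_abs] at h
  rw [abs_le] at hfinal
  constructor
  · rw [show ((p:ℝ)-2)/((p:ℝ)-1) = 1 - 1/((p:ℝ)-1) by field_simp; ring]
    linarith [hfinal.1]
  · rw [show (p:ℝ)/((p:ℝ)-1) = 1 + 1/((p:ℝ)-1) by field_simp; ring]
    linarith [hfinal.2]

theorem stmt_6 (p m : ℤ) (hp : 2 ≤ p) (hm1 : p + 1 < m) (hm2 : m < 2 * p - 1) :
    (p : ℝ) / ((p : ℝ) - 1) ∈ setS' p m ∧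
    ((p : ℝ) - 2) / ((p : ℝ) - 1) ∈ setS' p m ∧
    ∀ x ∈ setS' p m,
      ((p : ℝ) - 2) / ((p : ℝ) - 1) ≤ x ∧ x ≤ (p : ℝ) / ((p : ℝ) - 1) :=
  ⟨aux_mem_max p m hp hm1, aux_mem_min p m hp hm1, fun x hx => aux_bound p m hp hm1 hm2 x hx⟩
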